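/- Consider the restless-bandit LP with a dynamic population, i.e. λ_k > 0 for every class k. Assume the set of optimal solutions of (LP) is nonempty and bounded, and assume that either p_k(j) > 0 for all j,k, or C_k(j,0) > 0 for all j,k. Then (LP) admits an optimal solution x* = (x*^a_{j,k}) with the property that x*^0_{j,k} · x*^1_{j,k} > 0 for at most one pair (j,k); that is, with the possible exception of a single state–class pair, every pair (j,k) has x*^0_{j,k} = 0 or x*^1_{j,k} = 0. -/

import Mathlib

open Finset

/-- Feasibility for the restless-bandit LP. -/
def LPFeasible {K : ℕ} {J : Fin K → ℕ} (lam : Fin K → ℝ)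
    (p : (k : Fin K) → Fin (J k) → ℝ)
    (q : (k : Fin K) → Fin (J k) → Fin (J k) → Fin 2 → ℝ)
    (α : ℝ) (xinit : Fin K → ℝ)
    (x : (k : Fin K) → Fin (J k) → Fin 2 → ℝ) : Prop :=
  (∀ k j, 0 = lam k * p k j + ∑ a : Fin 2, ∑ i, x k i a * q k j i a) ∧
  (∑ k, ∑ j, x k j 1 ≤ α) ∧
  (∀ k, lam k = 0 → ∑ j, ∑ a : Fin 2, x k j a = xinit k) ∧
  (∀ k j a, 0 ≤ x k j a)

/-- The objective of the restless-bandit LP. -/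
def LPCost {K : ℕ} {J : Fin K → ℕ}
    (C : (k : Fin K) → Fin (J k) → Fin 2 → ℝ)
    (x : (k : Fin K) → Fin (J k) → Fin 2 → ℝ) : ℝ :=
  ∑ k, ∑ j, ∑ a : Fin 2, C k j a * x k j a

section Helpers

variable {K : ℕ} {J : Fin K → ℕ}

/-- The full transition matrix on the sigma index set. -/
def Qmat (q : (k : Fin K) → Fin (J k) → Fin (J k) → Fin 2 → ℝ)
    (r v : Σ k : Fin K, Fin (J k)) (a : Fin 2) : ℝ :=
  if h : v.1 = r.1 then q r.1 r.2 (Fin.cast (congrArg J h) v.2) a else 0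

lemma Qmat_diag (q : (k : Fin K) → Fin (J k) → Fin (J k) → Fin 2 → ℝ)
    (k : Fin K) (j i : Fin (J k)) (a : Fin 2) :
    Qmat q ⟨k, j⟩ ⟨k, i⟩ a = q k j i a := by
  simp [Qmat]

lemma Qmat_ne (q : (k : Fin K) → Fin (J k) → Fin (J k) → Fin 2 → ℝ)
    {r v : Σ k : Fin K, Fin (J k)} (h : v.1 ≠ r.1) (a : Fin 2) :
    Qmat q r v a = 0 := dif_neg h

lemma Qmat_nonneg (q : (k : Fin K) → Fin (J k) → Fin (J k) → Fin 2 → ℝ)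
    (hq : ∀ k (j i : Fin (J k)) (a : Fin 2), j ≠ i → 0 ≤ q k j i a)
    {r v : Σ k : Fin K, Fin (J k)} (hrv : v ≠ r) (a : Fin 2) :
    0 ≤ Qmat q r v a := by
  obtain ⟨k, j⟩ := r; obtain ⟨k', i⟩ := v
  unfold Qmat
  dsimp only
  split
  · next h =>
    subst h
    refine hq _ _ _ _ fun e => hrv ?_
    simp only [Fin.cast_eq_self] at e
    simp [← e]
  · exact le_rfl

lemma sum_Qmat (q : (k : Fin K) → Fin (J k) → Fin (J k) → Fin 2 → ℝ)
    (y : (k : Fin K) → Fin (J k) → Fin 2 → ℝ) (r : Σ k : Fin K, Fin (J k)) :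
    ∑ v : (Σ k : Fin K, Fin (J k)) × Fin 2, y v.1.1 v.1.2 v.2 * Qmat q r v.1 v.2
      = ∑ a : Fin 2, ∑ i, y r.1 i a * q r.1 r.2 i a := by
  obtain ⟨k, j⟩ := r
  rw [Fintype.sum_prod_type, Finset.sum_comm]
  refine Finset.sum_congr rfl fun a _ => ?_
  rw [← Finset.univ_sigma_univ, Finset.sum_sigma]
  refine Finset.sum_eq_single k (fun k' _ hk' => Finset.sum_eq_zero fun i _ => by
      rw [Qmat_ne q hk', mul_zero]) (fun h => absurd (Finset.mem_univ k) h) |>.trans ?_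
  exact Finset.sum_congr rfl fun i _ => by rw [Qmat_diag]

lemma cont_eval (k : Fin K) (j : Fin (J k)) (a : Fin 2) :
    Continuous fun x : (k : Fin K) → Fin (J k) → Fin 2 → ℝ => x k j a :=
  (continuous_apply a).comp ((continuous_apply j).comp (continuous_apply k))

lemma LPCost_add_smul (C : (k : Fin K) → Fin (J k) → Fin 2 → ℝ)
    (x d : (k : Fin K) → Fin (J k) → Fin 2 → ℝ) (c : ℝ) :
    LPCost C (x + c • d) = LPCost C x + c * LPCost C d := by
  simp only [LPCost, Finset.mul_sum, ← Finset.sum_add_distrib]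
  exact Finset.sum_congr rfl fun k _ => Finset.sum_congr rfl fun j _ =>
    Finset.sum_congr rfl fun a _ => by simp [mul_add]; ring

lemma LPCost_combo (C : (k : Fin K) → Fin (J k) → Fin 2 → ℝ)
    (x y : (k : Fin K) → Fin (J k) → Fin 2 → ℝ) (a b : ℝ) :
    LPCost C (a • x + b • y) = a * LPCost C x + b * LPCost C y := by
  simp only [LPCost, Finset.mul_sum, ← Finset.sum_add_distrib]
  exact Finset.sum_congr rfl fun k _ => Finset.sum_congr rfl fun j _ =>
    Finset.sum_congr rfl fun a2 _ => by simp [mul_add]; ring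

lemma bal_add_smul (q : (k : Fin K) → Fin (J k) → Fin (J k) → Fin 2 → ℝ)
    (k : Fin K) (j : Fin (J k))
    (x d : (k : Fin K) → Fin (J k) → Fin 2 → ℝ) (c : ℝ) :
    ∑ a : Fin 2, ∑ i, (x + c • d) k i a * q k j i a
      = (∑ a : Fin 2, ∑ i, x k i a * q k j i a)
        + c * ∑ a : Fin 2, ∑ i, d k i a * q k j i a := by
  simp only [Finset.mul_sum, ← Finset.sum_add_distrib]
  exact Finset.sum_congr rfl fun a _ => Finset.sum_congr rfl fun i _ => by
    simp [Pi.add_apply]; ring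

lemma bal_combo (q : (k : Fin K) → Fin (J k) → Fin (J k) → Fin 2 → ℝ)
    (k : Fin K) (j : Fin (J k))
    (x y : (k : Fin K) → Fin (J k) → Fin 2 → ℝ) (a b : ℝ) :
    ∑ a2 : Fin 2, ∑ i, (a • x + b • y) k i a2 * q k j i a2
      = a * (∑ a2 : Fin 2, ∑ i, x k i a2 * q k j i a2)
        + b * ∑ a2 : Fin 2, ∑ i, y k i a2 * q k j i a2 := by
  simp only [Finset.mul_sum, ← Finset.sum_add_distrib]
  exact Finset.sum_congr rfl fun a2 _ => Finset.sum_congr rfl fun i _ => by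
    simp [Pi.add_apply]; ring

lemma cap_add_smul (x d : (k : Fin K) → Fin (J k) → Fin 2 → ℝ) (c : ℝ) :
    ∑ k, ∑ j, (x + c • d) k j 1
      = (∑ k, ∑ j, x k j 1) + c * ∑ k, ∑ j, d k j 1 := by
  simp only [Finset.mul_sum, ← Finset.sum_add_distrib]
  exact Finset.sum_congr rfl fun k _ => Finset.sum_congr rfl fun j _ => by
    simp [Pi.add_apply]

lemma cap_combo (x y : (k : Fin K) → Fin (J k) → Fin 2 → ℝ) (a b : ℝ) :
    ∑ k, ∑ j, (a • x + b • y) k j 1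
      = a * (∑ k, ∑ j, x k j 1) + b * ∑ k, ∑ j, y k j 1 := by
  simp only [Finset.mul_sum, ← Finset.sum_add_distrib]
  exact Finset.sum_congr rfl fun k _ => Finset.sum_congr rfl fun j _ => by
    simp [Pi.add_apply]

end Helpers

theorem lp_dynamic_population_exists_optimal_almost_nondegenerate
    {K : ℕ} (hK : 1 ≤ K) {J : Fin K → ℕ} (hJ : ∀ k, 1 ≤ J k)
    (lam : Fin K → ℝ) (hdyn : ∀ k, 0 < lam k)
    (p : (k : Fin K) → Fin (J k) → ℝ)
    (hp : ∀ k j, 0 ≤ p k j) (hpsum : ∀ k, ∑ j, p k j = 1)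
    (q : (k : Fin K) → Fin (J k) → Fin (J k) → Fin 2 → ℝ)
    (q0 : (k : Fin K) → Fin (J k) → Fin 2 → ℝ)
    (hq : ∀ k (j i : Fin (J k)) (a : Fin 2), j ≠ i → 0 ≤ q k j i a)
    (hq0 : ∀ k (i : Fin (J k)) (a : Fin 2), 0 ≤ q0 k i a)
    (hdiag : ∀ k (j : Fin (J k)) (a : Fin 2),
      q k j j a = -(q0 k j a + ∑ i ∈ univ.filter (fun i => i ≠ j), q k i j a))
    (C : (k : Fin K) → Fin (J k) → Fin 2 → ℝ)
    (α : ℝ) (hα : 0 < α)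
    (xinit : Fin K → ℝ) (hxinit : ∀ k, 0 ≤ xinit k)
    (hOptNe : {x | LPFeasible lam p q α xinit x ∧
        ∀ y, LPFeasible lam p q α xinit y → LPCost C x ≤ LPCost C y}.Nonempty)
    (hOptBdd : Bornology.IsBounded {x | LPFeasible lam p q α xinit x ∧
        ∀ y, LPFeasible lam p q α xinit y → LPCost C x ≤ LPCost C y})
    (hpos : (∀ k j, 0 < p k j) ∨ (∀ k (j : Fin (J k)), 0 < C k j 0)) :
    ∃ xstar, LPFeasible lam p q α xinit xstar ∧
      (∀ y, LPFeasible lam p q α xinit y → LPCost C xstar ≤ LPCost C y) ∧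
      (∀ s t : Σ k : Fin K, Fin (J k),
        0 < xstar s.1 s.2 0 * xstar s.1 s.2 1 →
        0 < xstar t.1 t.2 0 * xstar t.1 t.2 1 → s = t) := by
  classical
  obtain ⟨x0, hx0feas, hx0opt⟩ := hOptNe
  set O : Set ((k : Fin K) → Fin (J k) → Fin 2 → ℝ) :=
    {x | LPFeasible lam p q α xinit x ∧
      ∀ y, LPFeasible lam p q α xinit y → LPCost C x ≤ LPCost C y} with hOdef
  have hOchar : O = {x | LPFeasible lam p q α xinit x ∧ LPCost C x ≤ LPCost C x0} := by
    ext x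
    simp only [hOdef, Set.mem_setOf_eq]
    exact ⟨fun h => ⟨h.1, h.2 x0 hx0feas⟩,
      fun h => ⟨h.1, fun y hy => le_trans h.2 (hx0opt y hy)⟩⟩
  have hOclosed : IsClosed O := by
    rw [hOchar]
    have hrep : {x | LPFeasible lam p q α xinit x ∧ LPCost C x ≤ LPCost C x0}
        = (⋂ k, ⋂ j, {x : (k : Fin K) → Fin (J k) → Fin 2 → ℝ |
            0 = lam k * p k j + ∑ a : Fin 2, ∑ i, x k i a * q k j i a})
          ∩ (({x : (k : Fin K) → Fin (J k) → Fin 2 → ℝ | ∑ k, ∑ j, x k j 1 ≤ α}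
          ∩ (⋂ k, ⋂ j, ⋂ a, {x : (k : Fin K) → Fin (J k) → Fin 2 → ℝ | 0 ≤ x k j a}))
          ∩ {x | LPCost C x ≤ LPCost C x0}) := by
      ext x
      simp only [Set.mem_setOf_eq, Set.mem_inter_iff, Set.mem_iInter, LPFeasible]
      constructor
      · rintro ⟨⟨h1, h2, _, h4⟩, h5⟩
        exact ⟨fun k j => h1 k j, ⟨⟨h2, fun k j a => h4 k j a⟩, h5⟩⟩
      · rintro ⟨h1, ⟨⟨h2, h4⟩, h5⟩⟩
        exact ⟨⟨h1, h2, fun k hk => absurd hk (hdyn k).ne', h4⟩, h5⟩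
    rw [hrep]
    refine IsClosed.inter (isClosed_iInter fun k => isClosed_iInter fun j =>
        isClosed_eq continuous_const (continuous_const.add
          (continuous_finset_sum _ fun a _ => continuous_finset_sum _ fun i _ =>
            (cont_eval k i a).mul continuous_const)))
      (IsClosed.inter (IsClosed.inter ?_ ?_) ?_)
    · exact isClosed_le (continuous_finset_sum _ fun k _ =>
        continuous_finset_sum _ fun j _ => cont_eval k j 1) continuous_const
    · exact isClosed_iInter fun k => isClosed_iInter fun j => isClosed_iInter fun a =>
        isClosed_le continuous_const (cont_eval k j a)
    · exact isClosed_le (continuous_finset_sum _ fun k _ =>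
        continuous_finset_sum _ fun j _ => continuous_finset_sum _ fun a _ =>
          continuous_const.mul (cont_eval k j a)) continuous_const
  have hOcomp : IsCompact O := Metric.isCompact_of_isClosed_isBounded hOclosed hOptBdd
  have hONe : O.Nonempty := ⟨x0, ⟨hx0feas, hx0opt⟩⟩
  obtain ⟨xs, hxsO, hxskey⟩ := hOcomp.extremePoints_nonempty hONe
  have hxsfeas : LPFeasible lam p q α xinit xs := hxsO.1
  have hxsopt : ∀ y, LPFeasible lam p q α xinit y → LPCost C xs ≤ LPCost C y := hxsO.2
  have hnn : ∀ k j a, 0 ≤ xs k j a := hxsfeas.2.2.2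
  refine ⟨xs, hxsfeas, hxsopt, ?_⟩
  intro s t hs ht
  by_contra hst
  have hspos : 0 < xs s.1 s.2 0 ∧ 0 < xs s.1 s.2 1 := by
    rcases mul_pos_iff.mp hs with h | h
    · exact h
    · exact absurd h.1 (not_lt.mpr (hnn s.1 s.2 0))
  have htpos : 0 < xs t.1 t.2 0 ∧ 0 < xs t.1 t.2 1 := by
    rcases mul_pos_iff.mp ht with h | h
    · exact h
    · exact absurd h.1 (not_lt.mpr (hnn t.1 t.2 0))
  set posP : Finset ((Σ k : Fin K, Fin (J k)) × Fin 2) :=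
    univ.filter (fun v => 0 < xs v.1.1 v.1.2 v.2) with hposP
  set N : Finset (Σ k : Fin K, Fin (J k)) :=
    univ.filter (fun r => 0 < xs r.1 r.2 0 ∨ 0 < xs r.1 r.2 1) with hNdef
  set S : Finset (Σ k : Fin K, Fin (J k)) :=
    univ.filter (fun r => 0 < xs r.1 r.2 0 ∧ 0 < xs r.1 r.2 1) with hSdef
  have hcard : posP.card = N.card + S.card := by
    rw [hposP, hNdef, hSdef, Finset.card_filter, Finset.card_filter, Finset.card_filter,
      Fintype.sum_prod_type, ← Finset.sum_add_distrib]
    refine Finset.sum_congr rfl fun r _ => ?_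
    rw [Fin.sum_univ_two]
    by_cases h0 : 0 < xs r.1 r.2 0 <;> by_cases h1 : 0 < xs r.1 r.2 1 <;>
      simp only [h0, h1, if_true, if_false, or_true, true_or, false_or, or_false,
        and_true, true_and, false_and, and_false, if_true, if_false] <;> norm_num
  have hScard2 : 2 ≤ S.card := by
    have hsS : s ∈ S := by
      rw [hSdef, Finset.mem_filter]
      exact ⟨Finset.mem_univ s, hspos⟩
    have htS : t ∈ S := by
      rw [hSdef, Finset.mem_filter]
      exact ⟨Finset.mem_univ t, htpos⟩
    exact Finset.one_lt_card.mpr ⟨s, hsS, t, htS, hst⟩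
  set f : {v // v ∈ posP} → (({r // r ∈ N} ⊕ Unit) → ℝ) := fun v =>
    Sum.elim (fun r => Qmat q r.1 v.1.1 v.1.2) (fun _ => if v.1.2 = 1 then 1 else 0) with hfdef
  have hnotLI : ¬ LinearIndependent ℝ f := by
    intro hLI
    have hle := hLI.fintype_card_le_finrank
    rw [Module.finrank_fintype_fun_eq_card] at hle
    have hc1 : Fintype.card {v // v ∈ posP} = posP.card := Fintype.card_coe posP
    have hc2 : Fintype.card ({r // r ∈ N} ⊕ Unit) = N.card + 1 := by
      rw [Fintype.card_sum, Fintype.card_coe, Fintype.card_unit]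
    rw [hc1, hc2] at hle
    omega
  obtain ⟨g, hgsum, v0, hgv0⟩ := Fintype.not_linearIndependent_iff.mp hnotLI
  set D : ((Σ k : Fin K, Fin (J k)) × Fin 2) → ℝ :=
    fun v => if h : v ∈ posP then g ⟨v, h⟩ else 0 with hDdef
  have hDzero : ∀ v, v ∉ posP → D v = 0 := by
    intro v hv
    rw [hDdef]
    exact dif_neg hv
  have hDposP : ∀ v, D v ≠ 0 → 0 < xs v.1.1 v.1.2 v.2 := by
    intro v hv
    by_cases h : v ∈ posP
    · rw [hposP, Finset.mem_filter] at h
      exact h.2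
    · exact absurd (hDzero v h) hv
  have hEval : ∀ w, ∑ v : {v // v ∈ posP}, g v * f v w = 0 := by
    intro w
    have h := congrFun hgsum w
    simpa [Finset.sum_apply, Pi.smul_apply, smul_eq_mul] using h
  have hfactA : ∀ r : Σ k : Fin K, Fin (J k), r ∉ N →
      ∀ v : (Σ k : Fin K, Fin (J k)) × Fin 2, 0 < xs v.1.1 v.1.2 v.2 →
        Qmat q r v.1 v.2 = 0 := by
    intro r hr v hv
    rw [hNdef, Finset.mem_filter, not_and, not_or] at hr
    have hr' := hr (Finset.mem_univ r)
    have hr0 : xs r.1 r.2 0 = 0 := le_antisymm (not_lt.mp hr'.1) (hnn r.1 r.2 0)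
    have hr1 : xs r.1 r.2 1 = 0 := le_antisymm (not_lt.mp hr'.2) (hnn r.1 r.2 1)
    have hbal := hxsfeas.1 r.1 r.2
    rw [← sum_Qmat q xs r] at hbal
    have hterm : ∀ w : (Σ k : Fin K, Fin (J k)) × Fin 2,
        0 ≤ xs w.1.1 w.1.2 w.2 * Qmat q r w.1 w.2 := by
      intro w
      rcases eq_or_ne w.1 r with h | h
      · have h0 : xs w.1.1 w.1.2 w.2 = 0 := by
          obtain ⟨σ, a⟩ := w
          dsimp only at h ⊢
          subst h
          fin_cases a
          · exact hr0
          · exact hr1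
        rw [h0, zero_mul]
      · exact mul_nonneg (hnn _ _ _) (Qmat_nonneg q hq h _)
    have hsum0 : ∑ w : (Σ k : Fin K, Fin (J k)) × Fin 2,
        xs w.1.1 w.1.2 w.2 * Qmat q r w.1 w.2 = 0 := by
      have hle : ∑ w : (Σ k : Fin K, Fin (J k)) × Fin 2,
          xs w.1.1 w.1.2 w.2 * Qmat q r w.1 w.2 ≤ 0 := by
        have hlp : 0 ≤ lam r.1 * p r.1 r.2 := mul_nonneg (hdyn r.1).le (hp r.1 r.2)
        linarith
      exact le_antisymm hle (Finset.sum_nonneg fun w _ => hterm w)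
    have hv0 := (Finset.sum_eq_zero_iff_of_nonneg (fun w _ => hterm w)).mp hsum0 v
      (Finset.mem_univ v)
    rcases mul_eq_zero.mp hv0 with h | h
    · exact absurd h (ne_of_gt hv)
    · exact h
  have hrow : ∀ r : Σ k : Fin K, Fin (J k),
      ∑ v : (Σ k : Fin K, Fin (J k)) × Fin 2, D v * Qmat q r v.1 v.2 = 0 := by
    intro r
    by_cases hr : r ∈ N
    · have h1 : ∑ v : (Σ k : Fin K, Fin (J k)) × Fin 2, D v * Qmat q r v.1 v.2
          = ∑ v ∈ posP, D v * Qmat q r v.1 v.2 :=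
        (Finset.sum_subset (Finset.subset_univ _) (fun v _ hv => by
          rw [hDzero v hv, zero_mul])).symm
      rw [h1, ← Finset.sum_coe_sort posP (fun v => D v * Qmat q r v.1 v.2)]
      rw [← hEval (Sum.inl ⟨r, hr⟩)]
      refine Finset.sum_congr rfl fun v _ => ?_
      rw [hDdef, hfdef]
      simp [dif_pos v.2]
    · refine Finset.sum_eq_zero fun v _ => ?_
      rcases eq_or_ne (D v) 0 with h | h
      · rw [h, zero_mul]
      · rw [hfactA r hr v (hDposP v h), mul_zero]
  have hcapD : ∑ r : Σ k : Fin K, Fin (J k), D (r, 1) = 0 := by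
    have h1 : ∑ v : (Σ k : Fin K, Fin (J k)) × Fin 2,
        D v * (if v.2 = 1 then (1 : ℝ) else 0) = 0 := by
      calc ∑ v : (Σ k : Fin K, Fin (J k)) × Fin 2, D v * (if v.2 = 1 then (1 : ℝ) else 0)
          = ∑ v ∈ posP, D v * (if v.2 = 1 then (1 : ℝ) else 0) :=
            (Finset.sum_subset (Finset.subset_univ _) (fun v _ hv => by
              rw [hDzero v hv, zero_mul])).symm
        _ = ∑ v : {v // v ∈ posP}, D v.1 * (if v.1.2 = 1 then (1 : ℝ) else 0) :=
            (Finset.sum_coe_sort posP _).symm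
        _ = ∑ v : {v // v ∈ posP}, g v * f v (Sum.inr ()) := by
            refine Finset.sum_congr rfl fun v _ => ?_
            rw [hDdef, hfdef]
            simp [dif_pos v.2]
        _ = 0 := hEval (Sum.inr ())
    rw [Fintype.sum_prod_type] at h1
    simpa [Fin.sum_univ_two] using h1
  set d : (k : Fin K) → Fin (J k) → Fin 2 → ℝ := fun k j a => D (⟨k, j⟩, a) with hddef
  have hbalD : ∀ k j, ∑ a : Fin 2, ∑ i, d k i a * q k j i a = 0 := by
    intro k j
    rw [← sum_Qmat q d ⟨k, j⟩]
    refine Eq.trans ?_ (hrow ⟨k, j⟩)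
    exact Finset.sum_congr rfl fun v _ => rfl
  have hcapd : ∑ k, ∑ j, d k j 1 = 0 := by
    have h := hcapD
    rw [← Finset.univ_sigma_univ, Finset.sum_sigma] at h
    exact h
  have hposNe : posP.Nonempty := by
    refine ⟨(s, 0), ?_⟩
    rw [hposP, Finset.mem_filter]
    exact ⟨Finset.mem_univ _, hspos.1⟩
  set δ := posP.inf' hposNe (fun v => xs v.1.1 v.1.2 v.2) with hδdef
  have hδ : 0 < δ := by
    rw [hδdef, Finset.lt_inf'_iff]
    intro v hv
    rw [hposP, Finset.mem_filter] at hv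
    exact hv.2
  set M := (∑ v : (Σ k : Fin K, Fin (J k)) × Fin 2, |D v|) + 1 with hMdef
  have hMpos : 0 < M := by
    rw [hMdef]
    positivity
  set ε := δ / M with hεdef
  have hεpos : 0 < ε := div_pos hδ hMpos
  have hbound : ∀ v : (Σ k : Fin K, Fin (J k)) × Fin 2,
      ε * |D v| ≤ xs v.1.1 v.1.2 v.2 := by
    intro v
    by_cases hv : v ∈ posP
    · have h1 : |D v| ≤ M := by
        rw [hMdef]
        have := Finset.single_le_sum (f := fun w => |D w|)
          (fun w _ => abs_nonneg _) (Finset.mem_univ v)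
        linarith
      have h2 : δ ≤ xs v.1.1 v.1.2 v.2 := Finset.inf'_le _ hv
      have h3 : ε * |D v| ≤ ε * M := mul_le_mul_of_nonneg_left h1 hεpos.le
      have h4 : ε * M = δ := by
        rw [hεdef]
        field_simp
      linarith
    · rw [hDzero v hv, abs_zero, mul_zero]
      exact hnn v.1.1 v.1.2 v.2
  have hfeas : ∀ c : ℝ, |c| ≤ ε → LPFeasible lam p q α xinit (xs + c • d) := by
    intro c hc
    refine ⟨?_, ?_, fun k hk => absurd hk (hdyn k).ne', ?_⟩
    · intro k j
      rw [bal_add_smul, hbalD k j, mul_zero, add_zero]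
      exact hxsfeas.1 k j
    · rw [cap_add_smul, hcapd, mul_zero, add_zero]
      exact hxsfeas.2.1
    · intro k j a
      have h1 : ε * |D (⟨k, j⟩, a)| ≤ xs k j a := hbound (⟨k, j⟩, a)
      have h2 : |c * d k j a| ≤ ε * |D (⟨k, j⟩, a)| := by
        rw [abs_mul]
        have : |d k j a| = |D (⟨k, j⟩, a)| := by rw [hddef]
        rw [this]
        exact mul_le_mul_of_nonneg_right hc (abs_nonneg _)
      have h3 := neg_abs_le (c * d k j a)
      simp only [Pi.add_apply, Pi.smul_apply, smul_eq_mul]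
      linarith
  have hcd0 : LPCost C d = 0 := by
    have hplus := hxsopt _ (hfeas ε (le_of_eq (abs_of_pos hεpos)))
    have hminus := hxsopt _ (hfeas (-ε) (by rw [abs_neg]; exact le_of_eq (abs_of_pos hεpos)))
    rw [LPCost_add_smul] at hplus hminus
    have h5 : 0 ≤ ε * LPCost C d := by linarith
    have h6 : ε * LPCost C d ≤ 0 := by nlinarith
    have h7 : ε * LPCost C d = 0 := le_antisymm h6 h5
    rcases mul_eq_zero.mp h7 with h | h
    · exact absurd h hεpos.ne'
    · exact h
  have hmemO : ∀ c : ℝ, |c| ≤ ε → (xs + c • d) ∈ O := by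
    intro c hc
    rw [hOdef]
    refine ⟨hfeas c hc, fun y hy => ?_⟩
    rw [LPCost_add_smul, hcd0, mul_zero, add_zero]
    exact hxsopt y hy
  have hseg : xs ∈ openSegment ℝ (xs + ε • d) (xs + (-ε) • d) := by
    refine ⟨1/2, 1/2, by norm_num, by norm_num, by norm_num, ?_⟩
    funext k j a
    simp only [Pi.add_apply, Pi.smul_apply, smul_eq_mul]
    ring
  have hkey := hxskey (hmemO ε (le_of_eq (abs_of_pos hεpos)))
    (hmemO (-ε) (by rw [abs_neg]; exact le_of_eq (abs_of_pos hεpos))) hseg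
  have heq := hkey
  have hd0 : d v0.1.1.1 v0.1.1.2 v0.1.2 = 0 := by
    have h := congrFun (congrFun (congrFun heq v0.1.1.1) v0.1.1.2) v0.1.2
    simp only [Pi.add_apply, Pi.smul_apply, smul_eq_mul] at h
    have h' : ε * d v0.1.1.1 v0.1.1.2 v0.1.2 = 0 := by linarith
    rcases mul_eq_zero.mp h' with h'' | h''
    · exact absurd h'' hεpos.ne'
    · exact h''
  apply hgv0
  have hDv0 : D v0.1 = g v0 := by
    rw [hDdef]
    simp [dif_pos v0.2]
  rw [← hDv0]
  have : d v0.1.1.1 v0.1.1.2 v0.1.2 = D v0.1 := by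
    rw [hddef]
  rw [← this]
  exact hd0
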